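/- Let Y be a finite nonempty set, Σ ⊆ P(Y) a finite collection, and μ : Σ → [0,1]. Then μ is not Dutch Bookable if and only if μ lies in the convex hull of the valuations {V_y : y ∈ Y}, i.e., there exist weights λ_y ≥ 0 with Σ_y λ_y = 1 such that μ(A) = Σ_y λ_y · χ_A(y) for all A ∈ Σ. -/

import Mathlib

/-- **De Finetti's characterization of Dutch Bookability (finite case).** Let `Y` be
a finite nonempty set, `Σ` a finite collection of subsets of `Y`, and `μ : Σ → ℝ`.
Then `μ` is not Dutch Bookable (there are no finite `V ⊆ Σ` and stakes `s : V → ℝ`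
making the payoff strictly negative at every `y ∈ Y`) if and only if `μ` lies in the
convex hull of the valuations `V_y = χ_{(·)}(y)`: there are weights `λ_y ≥ 0` with
`∑ λ_y = 1` such that `μ(A) = ∑_y λ_y · χ_A(y)` for every `A ∈ Σ`. -/
theorem not_dutch_bookable_iff_convex {Y : Type*} [Fintype Y] [Nonempty Y]
    (Sigma : Finset (Set Y)) (mu : Set Y → ℝ) :
    (¬ ∃ (V : Finset (Set Y)) (st : Set Y → ℝ), V ⊆ Sigma ∧
        ∀ y : Y, (∑ A ∈ V, st A * (Set.indicator A (fun _ => (1 : ℝ)) y - mu A)) < 0)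
    ↔ ∃ lam : Y → ℝ, (∀ y, 0 ≤ lam y) ∧ (∑ y, lam y = 1) ∧
        ∀ A ∈ Sigma, mu A = ∑ y, lam y * Set.indicator A (fun _ => (1 : ℝ)) y := by
  classical
  letI : Fintype (Set Y) := Fintype.ofFinite _
  constructor
  · intro hnb
    by_contra hlam
    apply hnb
    set g : Y → (Set Y → ℝ) :=
      fun y A => if A ∈ Sigma then Set.indicator A (fun _ => (1:ℝ)) y else 0 with hg
    set m : Set Y → ℝ := fun A => if A ∈ Sigma then mu A else 0 with hm
    let T : (Y → ℝ) →ₗ[ℝ] (Set Y → ℝ) :=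
      { toFun := fun w => ∑ y, w y • g y,
        map_add' := by
          intro a b
          simp [add_smul, Finset.sum_add_distrib],
        map_smul' := by
          intro c a
          simp [smul_smul, Finset.smul_sum] }
    have hmC : m ∉ T '' stdSimplex ℝ Y := by
      rintro ⟨w, ⟨hw0, hw1⟩, hwm⟩
      refine hlam ⟨w, hw0, hw1, fun A hA => ?_⟩
      have := congrFun hwm A
      simp only [T, LinearMap.coe_mk, AddHom.coe_mk, Finset.sum_apply, Pi.smul_apply,
        smul_eq_mul, hg, hm, if_pos hA] at this
      exact this.symm
    have hclosed : IsClosed (T '' stdSimplex ℝ Y) :=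
      ((isCompact_stdSimplex ℝ Y).image T.continuous_of_finiteDimensional).isClosed
    have hconv : Convex ℝ (T '' stdSimplex ℝ Y) :=
      (convex_stdSimplex ℝ Y).linear_image T
    obtain ⟨f, u, hfa, hfm⟩ := geometric_hahn_banach_closed_point hconv hclosed hmC
    have key : ∀ x : Set Y → ℝ, f x = ∑ A, x A * f (Pi.single A 1) := by
      intro x
      have hx : x = ∑ A, Pi.single A (x A) := (Finset.univ_sum_single x).symm
      calc f x = f (∑ A, Pi.single A (x A)) := by rw [← hx]
        _ = ∑ A, f (Pi.single A (x A)) := by rw [map_sum]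
        _ = ∑ A, x A * f (Pi.single A 1) := by
            refine Finset.sum_congr rfl fun A _ => ?_
            have : Pi.single A (x A) = x A • (Pi.single A (1:ℝ) : Set Y → ℝ) := by
              funext B
              by_cases h : B = A <;> simp [Pi.single_apply, h]
            rw [this, map_smul]
            simp
    refine ⟨Sigma, fun A => f (Pi.single A 1), subset_rfl, fun y => ?_⟩
    have hgy : g y ∈ T '' stdSimplex ℝ Y := by
      refine ⟨Pi.single y 1, ?_, ?_⟩
      · constructor
        · intro i; by_cases h : i = y <;> simp [Pi.single_apply, h]
        · simp
      · simp only [T, LinearMap.coe_mk, AddHom.coe_mk]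
        rw [Finset.sum_eq_single y]
        · simp
        · intro b _ hb; simp [Pi.single_apply, hb]
        · simp
    have h1 : f (g y) < u := hfa _ hgy
    have h2 : u < f m := hfm
    have hcomp : (∑ A ∈ Sigma, f (Pi.single A 1) * (Set.indicator A (fun _ => (1:ℝ)) y - mu A))
        = f (g y) - f m := by
      rw [key (g y), key m, ← Finset.sum_sub_distrib]
      rw [← Finset.sum_subset (Finset.subset_univ Sigma)]
      · refine Finset.sum_congr rfl fun A hA => ?_
        simp only [hg, hm, if_pos hA]
        ring
      · intro A _ hA
        simp [hg, hm, if_neg hA]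
    rw [hcomp]
    linarith
  · rintro ⟨lam, h0, h1, hmu⟩ ⟨V, st, hV, hDB⟩
    have hS0 : (∑ y, lam y * ∑ A ∈ V, st A * (Set.indicator A (fun _ => (1:ℝ)) y - mu A)) = 0 := by
      simp_rw [Finset.mul_sum, Finset.sum_comm (s := Finset.univ)]
      refine Finset.sum_eq_zero fun A hA => ?_
      have hmuA := hmu A (hV hA)
      have e1 : ∀ y : Y, lam y * (st A * (Set.indicator A (fun _ => (1:ℝ)) y - mu A))
          = st A * (lam y * Set.indicator A (fun _ => (1:ℝ)) y) - (st A * mu A) * lam y :=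
        fun y => by ring
      rw [Finset.sum_congr rfl (fun y _ => e1 y), Finset.sum_sub_distrib,
        ← Finset.mul_sum, ← Finset.mul_sum, ← hmuA, h1]
      ring
    have hex : ∃ y : Y, 0 < lam y := by
      by_contra h
      push_neg at h
      have : (∑ y, lam y) = 0 :=
        Finset.sum_eq_zero fun y _ => le_antisymm (h y) (h0 y)
      rw [h1] at this; norm_num at this
    obtain ⟨y0, hy0⟩ := hex
    have hSneg : (∑ y, lam y * ∑ A ∈ V, st A * (Set.indicator A (fun _ => (1:ℝ)) y - mu A)) < 0 := by
      have := Finset.sum_lt_sum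
        (f := fun y => lam y * ∑ A ∈ V, st A * (Set.indicator A (fun _ => (1:ℝ)) y - mu A))
        (g := fun _ => (0:ℝ))
        (fun y _ => mul_nonpos_of_nonneg_of_nonpos (h0 y) (hDB y).le)
        ⟨y0, Finset.mem_univ y0, mul_neg_of_pos_of_neg hy0 (hDB y0)⟩
      simpa using this
    linarith
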